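/- arXiv:math/0502233 — 4 statements merged into one kernel-verified Lean document; each statement's English description precedes it below -/
import Mathlib

section
/- Let X be a compact metrizable abelian topological group with a translation-invariant metric d inducing its topology and normalized Haar probability measure μ, and let a group Γ act on X by continuous group automorphisms. Let F ⊆ Γ be finite, δ > 0, and set d_F(x,y) = max_{γ∈F} d(γ⁻¹x, γ⁻¹y). If P is a finite partition of X into measurable sets each of d-diameter < δ, and E ⊆ X satisfies d_F(x,y) ≥ 2δ for all x ≠ y in E, then log |E| ≤ H(P^F) := −Σ_{A∈P^F} μ(A) log μ(A). -/
open MeasureTheory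
open scoped ENNReal Pointwise

/-- The common refinement `P^F = ⋁_{γ∈F} γP` of the translates of a finite partition `P`
of `X` by the elements of a finite set `F ⊆ Γ`: its elements are the nonempty
intersections `⋂_{γ∈F} γ•A_γ` with `A_γ ∈ P`. -/
noncomputable def refinePartition {Γ X : Type*} [Group Γ] [AddCommGroup X]
    [DistribMulAction Γ X] (F : Finset Γ) (P : Finset (Set X)) : Finset (Set X) :=
  letI := Classical.decEq (Set X)
  letI := Classical.decEq Γ
  letI : DecidablePred fun A : Set X => A.Nonempty := fun _ => Classical.propDecidable _
  ((Finset.univ : Finset (F → P)).image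
    fun c => ⋂ γ : F, (γ : Γ) • ((c γ : Set X))).filter fun A => A.Nonempty

/-- The entropy `H(Q) = −∑_{A∈Q} μ(A) log μ(A)` of a finite collection `Q` of subsets
(with the convention `0·log 0 = 0`). -/
noncomputable def partitionEntropy {X : Type*} [MeasurableSpace X] (μ : Measure X)
    (Q : Finset (Set X)) : ℝ :=
  -∑ A ∈ Q, (μ A).toReal * Real.log (μ A).toReal

/-- **Inequality in the proof of Theorem `t22`**: let `X` be a compact metrizable abelian
topological group with translation-invariant metric `d` and normalized Haar probability
measure `μ`, on which `Γ` acts by continuous group automorphisms.  If `P` is a finite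
measurable partition of `X` into sets of diameter `< δ` and `E ⊆ X` is `2δ`-separated for
`d_F(x,y) = max_{γ∈F} d(γ⁻¹x, γ⁻¹y)`, then `log |E| ≤ H(P^F)`. -/
theorem log_card_separated_le_partitionEntropy {Γ X : Type*} [Group Γ]
    [AddCommGroup X] [MetricSpace X] [CompactSpace X] [IsTopologicalAddGroup X]
    [MeasurableSpace X] [BorelSpace X]
    [DistribMulAction Γ X] (hcont : ∀ γ : Γ, Continuous fun x : X => γ • x)
    (hinvariant : ∀ x y z : X, dist (x + z) (y + z) = dist x y)
    (μ : Measure X) [μ.IsAddHaarMeasure] [IsProbabilityMeasure μ]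
    (F : Finset Γ) (δ : ℝ) (hδ : 0 < δ)
    (P : Finset (Set X)) (hmeas : ∀ A ∈ P, MeasurableSet A)
    (hdisj : ∀ A ∈ P, ∀ B ∈ P, A ≠ B → A ∩ B = ∅)
    (hcover : ⋃₀ (P : Set (Set X)) = Set.univ)
    (hdiam : ∀ A ∈ P, Metric.diam A < δ)
    (E : Set X)
    (hE : ∀ x ∈ E, ∀ y ∈ E, x ≠ y → ∃ γ ∈ F, 2 * δ ≤ dist (γ⁻¹ • x) (γ⁻¹ • y)) :
    E.Finite ∧ Real.log (E.ncard) ≤ partitionEntropy μ (refinePartition F P) := by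
  classical
  have hex : ∀ x : X, ∃ A ∈ P, x ∈ A := by
    intro x
    have : x ∈ ⋃₀ (P : Set (Set X)) := by rw [hcover]; trivial
    simpa using this
  choose part hpartP hpartmem using hex
  have hbdd : ∀ A : Set X, Bornology.IsBounded A := fun A =>
    (isCompact_univ.isBounded).subset (Set.subset_univ A)
  have hdistP : ∀ A ∈ P, ∀ u ∈ A, ∀ v ∈ A, dist u v < δ := by
    intro A hA u hu v hv
    calc dist u v ≤ Metric.diam A := Metric.dist_le_diam_of_mem (hbdd A) hu hv
    _ < δ := hdiam A hA
  have hdist0 : ∀ p q : X, dist p q = dist (p - q) 0 := by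
    intro p q
    have h := hinvariant (p - q) 0 q
    simp at h
    exact h
  -- injectivity of the cell map
  have hinj : Set.InjOn
      (fun x => fun γ : F => (⟨part ((γ : Γ)⁻¹ • x), hpartP _⟩ : {A // A ∈ P})) E := by
    intro x hx y hy hxy
    by_contra hne
    obtain ⟨γ, hγF, hsep⟩ := hE x hx y hy hne
    have h1 : part (γ⁻¹ • x) = part (γ⁻¹ • y) :=
      congrArg Subtype.val (congrFun hxy ⟨γ, hγF⟩)
    have h2 : dist (γ⁻¹ • x) (γ⁻¹ • y) < δ :=
      hdistP _ (hpartP (γ⁻¹ • y)) _ (h1 ▸ hpartmem (γ⁻¹ • x)) _ (hpartmem _)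
    linarith
  have hfinE : E.Finite := Set.Finite.of_finite_image (Set.toFinite _) hinj
  -- membership in the refined partition
  have hQmem : ∀ A : Set X, A ∈ refinePartition F P ↔
      (∃ c : F → {B // B ∈ P}, (⋂ γ : F, (γ : Γ) • ((c γ : Set X))) = A) ∧ A.Nonempty := by
    intro A
    simp [refinePartition]
  have hsmul_meas : ∀ (γ : Γ) (A : Set X), MeasurableSet A → MeasurableSet (γ • A) := by
    intro γ A hA
    have h : γ • A = (fun x : X => γ⁻¹ • x) ⁻¹' A := by
      ext x; simp [Set.mem_smul_set_iff_inv_smul_mem]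
    rw [h]
    exact (hcont γ⁻¹).measurable hA
  have hQmeas : ∀ A ∈ refinePartition F P, MeasurableSet A := by
    intro A hA
    obtain ⟨⟨c, rfl⟩, -⟩ := (hQmem A).1 hA
    exact MeasurableSet.iInter fun γ => hsmul_meas _ _ (hmeas _ (c γ).2)
  have hQdisj : (↑(refinePartition F P) : Set (Set X)).PairwiseDisjoint id := by
    intro A hA B hB hAB
    obtain ⟨⟨c, rfl⟩, -⟩ := (hQmem A).1 hA
    obtain ⟨⟨c', rfl⟩, -⟩ := (hQmem B).1 hB
    have hcc : c ≠ c' := by rintro rfl; exact hAB rfl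
    obtain ⟨γ, hγ⟩ := Function.ne_iff.1 hcc
    refine Set.disjoint_left.2 fun z hzA hzB => ?_
    have h1 : (γ : Γ)⁻¹ • z ∈ (c γ : Set X) :=
      Set.mem_smul_set_iff_inv_smul_mem.1 (Set.mem_iInter.1 hzA γ)
    have h2 : (γ : Γ)⁻¹ • z ∈ (c' γ : Set X) :=
      Set.mem_smul_set_iff_inv_smul_mem.1 (Set.mem_iInter.1 hzB γ)
    have he : (c γ : Set X) ∩ (c' γ : Set X) = ∅ :=
      hdisj _ (c γ).2 _ (c' γ).2 (fun h => hγ (Subtype.ext h))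
    exact Set.notMem_empty ((γ : Γ)⁻¹ • z) (he ▸ Set.mem_inter h1 h2)
  have hQcover : ⋃ A ∈ refinePartition F P, A = Set.univ := by
    ext x
    simp only [Set.mem_univ, iff_true, Set.mem_iUnion]
    have hxmem : x ∈ ⋂ γ : F, (γ : Γ) • (part ((γ : Γ)⁻¹ • x) : Set X) := by
      refine Set.mem_iInter.2 fun γ => ?_
      exact Set.mem_smul_set_iff_inv_smul_mem.2 (hpartmem _)
    refine ⟨_, ?_, hxmem⟩
    exact (hQmem _).2 ⟨⟨fun γ => ⟨part ((γ : Γ)⁻¹ • x), hpartP _⟩, rfl⟩, ⟨x, hxmem⟩⟩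
  have hsum1 : ∑ A ∈ refinePartition F P, μ A = 1 := by
    have h := (measure_biUnion_finset (μ := μ) hQdisj hQmeas).symm
    simp only [id_eq] at h
    rw [hQcover, measure_univ] at h
    convert h.symm using 2
    exact h.symm
  -- key estimate
  have hkey : ∀ A ∈ refinePartition F P, (E.ncard : ℝ≥0∞) * μ A ≤ 1 := by
    intro A hA
    obtain ⟨⟨c, hAc⟩, hne⟩ := (hQmem A).1 hA
    obtain ⟨a, ha⟩ := hne
    have hmA : MeasurableSet A := hQmeas A hA
    have hdisjT : (↑hfinE.toFinset : Set X).PairwiseDisjoint (fun x => (x - a) +ᵥ A) := by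
      intro x hx y hy hxy
      refine Set.disjoint_left.2 fun z hzx hzy => ?_
      obtain ⟨u, hu, huz⟩ := hzx
      obtain ⟨v, hv, hvz⟩ := hzy
      rw [Set.Finite.coe_toFinset] at hx hy
      obtain ⟨γ, hγF, hsep⟩ := hE x hx y hy hxy
      have hxyuv : x - y = v - u := by
        have h : (x - a) + u = (y - a) + v := huz.trans hvz.symm
        have h0 : ((x - a) + u) - ((y - a) + v) = 0 := sub_eq_zero.mpr h
        have h1 : (x - y) - (v - u) = 0 := by rw [← h0]; abel
        exact sub_eq_zero.mp h1
      have h1 : (γ : Γ)⁻¹ • u ∈ (c ⟨γ, hγF⟩ : Set X) := by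
        have := Set.mem_iInter.1 (hAc ▸ hu) ⟨γ, hγF⟩
        exact Set.mem_smul_set_iff_inv_smul_mem.1 this
      have h2 : (γ : Γ)⁻¹ • v ∈ (c ⟨γ, hγF⟩ : Set X) := by
        have := Set.mem_iInter.1 (hAc ▸ hv) ⟨γ, hγF⟩
        exact Set.mem_smul_set_iff_inv_smul_mem.1 this
      have hlt : dist ((γ : Γ)⁻¹ • v) ((γ : Γ)⁻¹ • u) < δ :=
        hdistP _ (c ⟨γ, hγF⟩).2 _ h2 _ h1
      have heq : dist (γ⁻¹ • x) (γ⁻¹ • y) = dist (γ⁻¹ • v) (γ⁻¹ • u) := by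
        rw [hdist0 (γ⁻¹ • x), hdist0 (γ⁻¹ • v)]
        congr 1
        rw [← smul_sub, ← smul_sub, hxyuv]
      rw [heq] at hsep
      linarith
    have hmT : ∀ x ∈ hfinE.toFinset, MeasurableSet ((x - a) +ᵥ A) := by
      intro x _
      have h : (x - a) +ᵥ A = (fun z : X => -(x - a) + z) ⁻¹' A := by
        ext z
        rw [Set.mem_vadd_set_iff_neg_vadd_mem]
        rfl
      rw [h]
      exact ((continuous_const.add continuous_id).measurable) hmA
    calc (E.ncard : ℝ≥0∞) * μ A
        = ∑ x ∈ hfinE.toFinset, μ ((x - a) +ᵥ A) := by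
          have hμT : ∀ x ∈ hfinE.toFinset, μ ((x - a) +ᵥ A) = μ A := fun x _ =>
            measure_vadd μ (x - a) A
          rw [Finset.sum_congr rfl hμT, Finset.sum_const, nsmul_eq_mul,
            Set.ncard_eq_toFinset_card E hfinE]
      _ = μ (⋃ x ∈ hfinE.toFinset, (x - a) +ᵥ A) :=
          (measure_biUnion_finset (μ := μ) hdisjT hmT).symm
      _ ≤ μ Set.univ := measure_mono (Set.subset_univ _)
      _ = 1 := measure_univ
  refine ⟨hfinE, ?_⟩
  by_cases hn : E.ncard = 0
  · rw [hn]
    simp only [Nat.cast_zero, Real.log_zero]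
    rw [partitionEntropy, le_neg, neg_zero]
    refine Finset.sum_nonpos fun A _ => ?_
    have h0 : 0 ≤ (μ A).toReal := ENNReal.toReal_nonneg
    have h1 : (μ A).toReal ≤ 1 := by
      have := prob_le_one (μ := μ) (s := A)
      simpa using ENNReal.toReal_mono ENNReal.one_ne_top this
    exact mul_nonpos_of_nonneg_of_nonpos h0 (Real.log_nonpos h0 h1)
  · have hn1 : (1 : ℝ) ≤ (E.ncard : ℝ) := by
      exact_mod_cast Nat.one_le_iff_ne_zero.2 hn
    have hterm : ∀ A ∈ refinePartition F P,
        (μ A).toReal * Real.log (E.ncard) ≤ -((μ A).toReal * Real.log (μ A).toReal) := by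
      intro A hA
      rcases eq_or_ne (μ A) 0 with h0 | h0
      · simp [h0]
      · have hpos : 0 < (μ A).toReal := ENNReal.toReal_pos h0 (measure_ne_top μ A)
        have h2 : μ A ≤ ((E.ncard : ℝ≥0∞))⁻¹ := by
          rw [ENNReal.le_inv_iff_mul_le, mul_comm]
          exact hkey A hA
        have hle : (μ A).toReal ≤ ((E.ncard : ℝ))⁻¹ := by
          have h3 := ENNReal.toReal_mono (by simp [hn]) h2
          rw [ENNReal.toReal_inv] at h3
          simpa using h3
        have hlog : Real.log (μ A).toReal ≤ -Real.log (E.ncard) := by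
          rw [← Real.log_inv]
          exact Real.log_le_log hpos hle
        have := mul_le_mul_of_nonneg_left hlog (le_of_lt hpos)
        linarith
    have hsumR : ∑ A ∈ refinePartition F P, (μ A).toReal = 1 := by
      have h := congrArg ENNReal.toReal hsum1
      rwa [ENNReal.toReal_sum (fun a _ => measure_ne_top μ a), ENNReal.toReal_one] at h
    calc Real.log (E.ncard)
        = (∑ A ∈ refinePartition F P, (μ A).toReal) * Real.log (E.ncard) := by
          rw [hsumR, one_mul]
      _ = ∑ A ∈ refinePartition F P, (μ A).toReal * Real.log (E.ncard) :=
          Finset.sum_mul _ _ _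
      _ ≤ ∑ A ∈ refinePartition F P, -((μ A).toReal * Real.log (μ A).toReal) :=
          Finset.sum_le_sum hterm
      _ = partitionEntropy μ (refinePartition F P) := by
        rw [partitionEntropy, Finset.sum_neg_distrib]
end

section
/- Let Γ be a countable discrete group and g ∈ ℂΓ with ‖g‖₁ < 1, so that u = 1 + r(g) is an invertible bounded operator on ℓ²(Γ). Assume that u is positive. Then ⟨(log u) δ_e, δ_e⟩ = Σ_{ν=1}^∞ ((−1)^{ν−1}/ν) · (g^ν)_e, where g^ν denotes the ν-th power of g in the group algebra ℂΓ, (g^ν)_e is its coefficient at the identity e, and the series converges absolutely. -/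
open Filter
open scoped Pointwise
open Topology
open scoped ENNReal

/-- The Hilbert space `ℓ²(Γ)` of square-summable complex valued functions on `Γ`. -/
abbrev l2 (Γ : Type*) : Type _ := lp (fun _ : Γ => ℂ) 2

/-- `R` is the operator `r(g)` of right convolution by `g ∈ ℂΓ`:
`(r(g)x)(γ) = ∑_δ a_δ x(γδ)`. -/
def IsRConv {Γ : Type*} [Group Γ] (g : MonoidAlgebra ℂ Γ) (R : l2 Γ →L[ℂ] l2 Γ) : Prop :=
  ∀ (x : l2 Γ) (γ : Γ), R x γ = ∑ δ ∈ g.coeff.support, g.coeff δ * x (γ * δ)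

section Aux

variable {Γ : Type*} [Group Γ]

private lemma two_toReal_pos' : (0:ℝ) < (2 : ℝ≥0∞).toReal := by norm_num

set_option maxHeartbeats 1000000 in
/-- Right translation on `ℓ²`. -/
noncomputable def rtransl (δ : Γ) (x : l2 Γ) : l2 Γ :=
  ⟨fun γ => x (γ * δ), by
    apply memℓp_gen
    have hs : Summable fun γ => ‖x γ‖ ^ (2 : ℝ≥0∞).toReal :=
      (lp.memℓp x).summable two_toReal_pos'
    exact (Equiv.mulRight δ).summable_iff.mpr hs⟩

@[simp] lemma rtransl_apply (δ : Γ) (x : l2 Γ) (γ : Γ) : rtransl δ x γ = x (γ * δ) := rfl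

lemma norm_rtransl (δ : Γ) (x : l2 Γ) : ‖rtransl δ x‖ = ‖x‖ := by
  rw [lp.norm_eq_tsum_rpow two_toReal_pos', lp.norm_eq_tsum_rpow two_toReal_pos']
  congr 1
  exact (Equiv.mulRight δ).tsum_eq fun γ => ‖x γ‖ ^ (2 : ℝ≥0∞).toReal

lemma Rx_eq (g : MonoidAlgebra ℂ Γ) (R : l2 Γ →L[ℂ] l2 Γ) (hR : IsRConv g R) (x : l2 Γ) :
    R x = ∑ δ ∈ g.coeff.support, g.coeff δ • rtransl δ x := by
  apply lp.ext
  funext γ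
  rw [hR x γ, lp.coeFn_sum]
  simp [Finset.sum_apply]

lemma norm_R_le (g : MonoidAlgebra ℂ Γ) (R : l2 Γ →L[ℂ] l2 Γ) (hR : IsRConv g R) :
    ‖R‖ ≤ ∑ δ ∈ g.coeff.support, ‖g.coeff δ‖ := by
  refine R.opNorm_le_bound (Finset.sum_nonneg fun _ _ => norm_nonneg _) fun x => ?_
  rw [Rx_eq g R hR x]
  calc ‖∑ δ ∈ g.coeff.support, g.coeff δ • rtransl δ x‖
      ≤ ∑ δ ∈ g.coeff.support, ‖g.coeff δ • rtransl δ x‖ := norm_sum_le _ _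
    _ = ∑ δ ∈ g.coeff.support, ‖g.coeff δ‖ * ‖x‖ := by simp [norm_smul, norm_rtransl]
    _ = (∑ δ ∈ g.coeff.support, ‖g.coeff δ‖) * ‖x‖ := by rw [Finset.sum_mul]

variable [DecidableEq Γ]

lemma pow_succ_apply' (g : MonoidAlgebra ℂ Γ) (n : ℕ) (γ : Γ) :
    (g ^ (n+1)).coeff γ = ∑ a ∈ g.coeff.support, g.coeff a * (g ^ n).coeff (a⁻¹ * γ) := by
  rw [pow_succ', MonoidAlgebra.coeff_mul_apply_left, Finsupp.sum]

lemma pow_apply_bound (g : MonoidAlgebra ℂ Γ) (n : ℕ) (γ : Γ) :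
    ‖(g ^ n).coeff γ‖ ≤ (∑ δ ∈ g.coeff.support, ‖g.coeff δ‖) ^ n := by
  induction n generalizing γ with
  | zero =>
      simp only [pow_zero]
      rw [show ((1 : MonoidAlgebra ℂ Γ).coeff γ) = (Finsupp.single (1:Γ) (1:ℂ)) γ from rfl]
      rw [Finsupp.single_apply]
      split <;> simp
  | succ n ih =>
      rw [pow_succ_apply']
      calc ‖∑ a ∈ g.coeff.support, g.coeff a * (g ^ n).coeff (a⁻¹ * γ)‖
          ≤ ∑ a ∈ g.coeff.support, ‖g.coeff a * (g ^ n).coeff (a⁻¹ * γ)‖ := norm_sum_le _ _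
        _ ≤ ∑ a ∈ g.coeff.support, ‖g.coeff a‖ * (∑ δ ∈ g.coeff.support, ‖g.coeff δ‖) ^ n := by
            refine Finset.sum_le_sum fun a _ => ?_
            rw [norm_mul]
            exact mul_le_mul_of_nonneg_left (ih _) (norm_nonneg _)
        _ = (∑ δ ∈ g.coeff.support, ‖g.coeff δ‖) ^ (n+1) := by
            rw [← Finset.sum_mul, pow_succ, mul_comm]

lemma Rpow_single (g : MonoidAlgebra ℂ Γ) (R : l2 Γ →L[ℂ] l2 Γ) (hR : IsRConv g R) :
    ∀ n γ, ((R ^ (n+1)) (lp.single 2 (1:Γ) 1)) γ = (g ^ (n+1)).coeff γ⁻¹ := by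
  intro n
  induction n with
  | zero =>
      intro γ
      rw [pow_one, pow_one, hR]
      have h1 : ∀ δ ∈ g.coeff.support, g.coeff δ * (lp.single 2 (1:Γ) (1:ℂ) : l2 Γ) (γ * δ)
          = if δ = γ⁻¹ then g.coeff δ else 0 := by
        intro δ _
        rcases eq_or_ne δ γ⁻¹ with h | h
        · subst h; rw [if_pos rfl, mul_inv_cancel]
          rw [lp.single_apply_self]; ring
        · rw [if_neg h, lp.single_apply_ne]
          · ring
          · intro hc
            exact h (by rw [← one_mul δ, ← inv_mul_cancel γ, mul_assoc, hc, mul_one])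
      rw [Finset.sum_congr rfl h1, Finset.sum_ite_eq' g.coeff.support γ⁻¹ (fun δ => g.coeff δ)]
      split
      · rfl
      · next hns => exact (Finsupp.notMem_support_iff.mp hns).symm
  | succ n ih =>
      intro γ
      rw [pow_succ' R (n+1), ContinuousLinearMap.mul_apply, hR]
      rw [pow_succ_apply' g (n+1) γ⁻¹]
      refine Finset.sum_congr rfl fun a _ => ?_
      rw [ih (γ * a), mul_inv_rev]

end Aux

set_option maxHeartbeats 2000000 in
set_option synthInstance.maxHeartbeats 400000 in
/-- **Formula (9) of the paper**: for `g ∈ ℂΓ` with `‖g‖₁ < 1` and `u = 1 + r(g)`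
positive, `log det_{NΓ} u = tr_{NΓ} (log u) = ∑_{ν≥1} ((−1)^{ν−1}/ν)·(g^ν)_e`, the series
converging absolutely.  (Here `⟨(log u) δ_e, δ_e⟩ = ((log u) δ_e)(e)`.) -/
theorem trace_log_eq_tsum_of_l1_norm_lt_one {Γ : Type*} [Group Γ] [Countable Γ]
    [DecidableEq Γ]
    (g : MonoidAlgebra ℂ Γ) (hg : ∑ δ ∈ g.coeff.support, ‖g.coeff δ‖ < 1)
    (R : l2 Γ →L[ℂ] l2 Γ) (hR : IsRConv g R)
    (hsa : IsSelfAdjoint (1 + R))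
    (hspec : spectrum ℂ (1 + R) ⊆ {z : ℂ | 0 ≤ z.re ∧ z.im = 0}) :
    Summable (fun ν : ℕ => ‖((-1 : ℂ) ^ ν / ((ν : ℂ) + 1)) * (g ^ (ν + 1)).coeff 1‖) ∧
    (cfc (instCFC := IsSelfAdjoint.instContinuousFunctionalCalculus) Real.log (1 + R)) (lp.single 2 (1:Γ) 1) (1:Γ)
      = ∑' ν : ℕ, ((-1 : ℂ) ^ ν / ((ν : ℂ) + 1)) * (g ^ (ν + 1)).coeff 1 := by
  set r : ℝ := ∑ δ ∈ g.coeff.support, ‖g.coeff δ‖ with hrdef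
  have hr0 : 0 ≤ r := Finset.sum_nonneg fun _ _ => norm_nonneg _
  have hr1 : r < 1 := hg
  have hRnorm : ‖R‖ ≤ r := norm_R_le g R hR
  -- the summability part
  have hbound : ∀ ν : ℕ, ‖((-1 : ℂ) ^ ν / ((ν : ℂ) + 1)) * (g ^ (ν + 1)).coeff 1‖ ≤ r ^ (ν + 1) := by
    intro ν
    rw [norm_mul]
    have h1 : ‖((-1 : ℂ) ^ ν / ((ν : ℂ) + 1))‖ ≤ 1 := by
      rw [norm_div, norm_pow, norm_neg, norm_one, one_pow,
        show ((ν:ℂ)+1) = ((ν+1:ℕ):ℂ) by push_cast; ring, Complex.norm_natCast]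
      rw [div_le_one (by positivity)]
      exact_mod_cast Nat.succ_le_succ (Nat.zero_le ν)
    calc ‖((-1 : ℂ) ^ ν / ((ν : ℂ) + 1))‖ * ‖(g ^ (ν + 1)).coeff 1‖
        ≤ 1 * (r ^ (ν + 1)) := by
          exact mul_le_mul h1 (pow_apply_bound g (ν+1) 1) (norm_nonneg _) zero_le_one
      _ = r ^ (ν + 1) := one_mul _
  have hsummable : Summable (fun ν : ℕ => ‖((-1 : ℂ) ^ ν / ((ν : ℂ) + 1)) * (g ^ (ν + 1)).coeff 1‖) := by
    refine Summable.of_nonneg_of_le (fun _ => norm_nonneg _) hbound ?_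
    simpa [pow_succ, mul_comm] using (summable_geometric_of_lt_one hr0 hr1).mul_left r
  refine ⟨hsummable, ?_⟩
  letI : ContinuousFunctionalCalculus ℝ (l2 Γ →L[ℂ] l2 Γ) IsSelfAdjoint :=
    IsSelfAdjoint.instContinuousFunctionalCalculus
  have : Nontrivial (l2 Γ) := ⟨⟨lp.single 2 (1:Γ) 1, 0, fun hc => by
    have h1 : (lp.single 2 (1:Γ) (1:ℂ) : l2 Γ) (1:Γ) = (0 : l2 Γ) (1:Γ) := by rw [hc]
    rw [lp.single_apply_self] at h1
    simp at h1⟩⟩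
  set a : (l2 Γ →L[ℂ] l2 Γ) := 1 + R with ha
  have hsa' : IsSelfAdjoint a := hsa
  have haR : a - 1 = R := by rw [ha]; exact add_sub_cancel_left 1 R
  -- spectrum bound
  have hspecR : ∀ x ∈ spectrum ℝ a, |x - 1| ≤ r := by
    intro x hx
    have hmem : x - 1 ∈ spectrum ℝ a - ({(1:ℝ)} : Set ℝ) :=
      Set.sub_mem_sub hx (Set.mem_singleton (1:ℝ))
    rw [spectrum.sub_singleton_eq, map_one, haR] at hmem
    calc |x - 1| = ‖x - 1‖ := rfl
      _ ≤ ‖R‖ := spectrum.norm_le_norm_of_mem hmem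
      _ ≤ r := hRnorm
  have hlog_cont : ContinuousOn Real.log (spectrum ℝ a) := by
    refine Real.continuousOn_log.mono fun x hx => ?_
    have h1 := (abs_le.mp (hspecR x hx)).1
    simp only [Set.mem_compl_iff, Set.mem_singleton_iff]
    intro h0
    rw [h0] at h1
    linarith
  -- partial sum operators
  set P : ℕ → (l2 Γ →L[ℂ] l2 Γ) :=
    fun N => ∑ ν ∈ Finset.range N, ((-1:ℝ)^ν/((ν:ℝ)+1)) • R^(ν+1) with hP
  have hcfcP : ∀ N, cfc (fun t : ℝ =>
      ∑ ν ∈ Finset.range N, ((-1:ℝ)^ν/((ν:ℝ)+1)) * (t-1)^(ν+1)) a = P N := by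
    intro N
    have hfun : (fun t : ℝ => ∑ ν ∈ Finset.range N, ((-1:ℝ)^ν/((ν:ℝ)+1)) * (t-1)^(ν+1))
        = ∑ ν ∈ Finset.range N, (fun t : ℝ => ((-1:ℝ)^ν/((ν:ℝ)+1)) * (t-1)^(ν+1)) := by
      ext t; simp
    rw [hfun, cfc_sum _ a _ (fun i _ => by fun_prop)]
    refine Finset.sum_congr rfl fun ν _ => ?_
    rw [cfc_const_mul ((-1:ℝ)^ν/((ν:ℝ)+1)) (fun t : ℝ => (t-1)^(ν+1)) a (by fun_prop),
      cfc_pow (fun t : ℝ => t - 1) (ν+1) a (by fun_prop) hsa',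
      cfc_sub (fun t : ℝ => t) (fun _ : ℝ => (1:ℝ)) a (by fun_prop) (by fun_prop),
      cfc_id' ℝ a, cfc_const (1:ℝ) a, map_one, haR]
  -- scalar estimate
  have hkey : ∀ N : ℕ, ∀ x ∈ spectrum ℝ a,
      ‖Real.log x - ∑ ν ∈ Finset.range N, ((-1:ℝ)^ν/((ν:ℝ)+1)) * (x-1)^(ν+1)‖
        ≤ r^(N+1)/(1-r) := by
    intro N x hx
    have hy : |1 - x| ≤ r := by rw [abs_sub_comm]; exact hspecR x hx
    have hy1 : |1 - x| < 1 := lt_of_le_of_lt hy hr1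
    have hlog := Real.abs_log_sub_add_sum_range_le hy1 N
    have hsum_eq : ∑ i ∈ Finset.range N, (1-x)^(i+1)/((i:ℝ)+1)
        = - ∑ ν ∈ Finset.range N, ((-1:ℝ)^ν/((ν:ℝ)+1)) * (x-1)^(ν+1) := by
      rw [← Finset.sum_neg_distrib]
      refine Finset.sum_congr rfl fun i _ => ?_
      rw [show (1-x) = -(x-1) by ring, neg_pow]
      ring
    have heq : Real.log x - ∑ ν ∈ Finset.range N, ((-1:ℝ)^ν/((ν:ℝ)+1)) * (x-1)^(ν+1)
        = (∑ i ∈ Finset.range N, (1-x)^(i+1)/((i:ℝ)+1)) + Real.log (1 - (1-x)) := by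
      rw [hsum_eq, show (1 - (1-x)) = x by ring]
      ring
    rw [Real.norm_eq_abs, heq]
    refine le_trans hlog ?_
    have h1r : 1 - r ≤ 1 - |1-x| := by linarith
    exact div_le_div₀ (pow_nonneg hr0 _) (pow_le_pow_left₀ (abs_nonneg _) hy _)
      (by linarith) h1r
  -- operator norm estimate and convergence
  have hdiff : ∀ N, ‖cfc Real.log a - P N‖ ≤ r^(N+1)/(1-r) := by
    intro N
    rw [← hcfcP N, ← cfc_sub Real.log
      (fun t : ℝ => ∑ ν ∈ Finset.range N, ((-1:ℝ)^ν/((ν:ℝ)+1)) * (t-1)^(ν+1))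
      a hlog_cont (by fun_prop)]
    exact norm_cfc_le (div_nonneg (pow_nonneg hr0 _) (by linarith)) (hkey N)
  have hgeo : Tendsto (fun N : ℕ => r^(N+1)/(1-r)) atTop (𝓝 0) := by
    have h1 := ((tendsto_pow_atTop_nhds_zero_of_lt_one hr0 hr1).div_const (1-r)).comp
      (tendsto_add_atTop_nat 1)
    simpa [Function.comp_def] using h1
  have htend : Tendsto P atTop (𝓝 (cfc Real.log a)) := by
    rw [tendsto_iff_norm_sub_tendsto_zero]
    refine squeeze_zero (fun N => norm_nonneg _) (fun N => ?_) hgeo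
    rw [norm_sub_rev]; exact hdiff N
  -- evaluation
  set δe : l2 Γ := lp.single 2 (1:Γ) 1 with hδe
  have h1 : Tendsto (fun N => P N δe) atTop (𝓝 (cfc Real.log a δe)) :=
    ((ContinuousLinearMap.apply ℂ (l2 Γ) δe).continuous.tendsto _).comp htend
  have h2 : LipschitzWith 1 (fun f : l2 Γ => f (1:Γ)) := by
    apply LipschitzWith.of_dist_le_mul
    intro f f'
    rw [NNReal.coe_one, one_mul, dist_eq_norm, dist_eq_norm]
    have hc : f (1:Γ) - f' (1:Γ) = (f - f') (1:Γ) := by rw [lp.coeFn_sub]; rfl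
    rw [hc]
    exact lp.norm_apply_le_norm two_ne_zero (f - f') (1:Γ)
  have heval : Tendsto (fun N => (P N δe) (1:Γ)) atTop (𝓝 ((cfc Real.log a δe) (1:Γ))) :=
    (h2.continuous.tendsto _).comp h1
  have hvals : ∀ N, (P N δe) (1:Γ)
      = ∑ ν ∈ Finset.range N, ((-1:ℂ)^ν/((ν:ℂ)+1)) * (g^(ν+1)).coeff 1 := by
    intro N
    rw [hP]
    rw [ContinuousLinearMap.sum_apply, lp.coeFn_sum, Finset.sum_apply]
    refine Finset.sum_congr rfl fun ν _ => ?_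
    rw [ContinuousLinearMap.smul_apply, lp.coeFn_smul, Pi.smul_apply]
    rw [show ((R^(ν+1)) δe) (1:Γ) = (g^(ν+1)).coeff (1:Γ)⁻¹ from Rpow_single g R hR ν 1]
    rw [inv_one, Complex.real_smul]
    push_cast
    ring
  have htsum : Tendsto (fun N => ∑ ν ∈ Finset.range N, ((-1:ℂ)^ν/((ν:ℂ)+1)) * (g^(ν+1)).coeff 1)
      atTop (𝓝 (∑' ν : ℕ, ((-1:ℂ)^ν/((ν:ℂ)+1)) * (g^(ν+1)).coeff 1)) :=
    (hsummable.of_norm).hasSum.tendsto_sum_nat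
  have heval' : Tendsto (fun N => ∑ ν ∈ Finset.range N, ((-1:ℂ)^ν/((ν:ℂ)+1)) * (g^(ν+1)).coeff 1)
      atTop (𝓝 ((cfc Real.log a δe) (1:Γ))) := by
    have := heval
    simp only [hvals] at this
    exact this
  exact tendsto_nhds_unique heval' htsum
end

section
/- Let Γ be a finitely generated countable discrete group and let f ∈ ℤΓ be a unit in L¹(Γ). Set ε = 1/(3‖f‖₁). Then every x ∈ X_f with ϑ(x(γ), 0) < ε for all γ ∈ Γ equals 0; consequently, for all x ≠ y in X_f there exists γ ∈ Γ with ϑ(x(γ), y(γ)) ≥ ε, i.e. the Γ-action on X_f is expansive. -/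
open Filter
open scoped ENNReal

/-- `f ∈ ℤΓ` is a unit in the convolution algebra `L¹(Γ)`: there is a summable
`g : Γ → ℂ` with `f⋆g = g⋆f = δ_e`. -/
def IsL1Unit {Γ : Type*} [Group Γ] [DecidableEq Γ] (f : Γ →₀ ℤ) : Prop :=
  ∃ g : Γ → ℂ, Summable (fun γ => ‖g γ‖) ∧
    (∀ γ : Γ, (∑' α : Γ, (f α : ℂ) * g (α⁻¹ * γ)) = if γ = 1 then 1 else 0) ∧
    (∀ γ : Γ, (∑' α : Γ, g α * (f (α⁻¹ * γ) : ℂ)) = if γ = 1 then 1 else 0)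

/-- The `ℓ¹`-norm `‖f‖₁ = ∑_δ |a_δ|` of `f = ∑_δ a_δ δ ∈ ℤΓ`. -/
def l1normZ {Γ : Type*} (f : Γ →₀ ℤ) : ℝ :=
  ∑ δ ∈ f.support, |(f δ : ℝ)|

/-- The subshift `X_f ⊆ (ℝ/ℤ)^Γ` dual to `ℤΓ/ℤΓf`. -/
def Xf {Γ : Type*} [Group Γ] (f : Γ →₀ ℤ) : Set (Γ → AddCircle (1:ℝ)) :=
  {x | ∀ γ : Γ, ∑ δ ∈ f.support, f δ • x (γ * δ) = 0}

lemma exists_lift_abs (z : AddCircle (1:ℝ)) :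
    ∃ r : ℝ, ((r : AddCircle (1:ℝ)) = z) ∧ |r| = ‖z‖ := by
  obtain ⟨x, rfl⟩ := QuotientAddGroup.mk_surjective z
  refine ⟨x - round x, ?_, ?_⟩
  · have : ((round x : ℝ) : AddCircle (1:ℝ)) = 0 := by
      rw [AddCircle.coe_eq_zero_iff]
      exact ⟨round x, by simp⟩
    rw [AddCircle.coe_sub, this, sub_zero]
  · rw [UnitAddCircle.norm_eq]

/-- **Proposition `t9` of the paper**: if `f ∈ ℤΓ` is a unit in `L¹(Γ)` then, with
`ε = 1/(3‖f‖₁)`, every `x ∈ X_f` with `ϑ(x(γ),0) < ε` for all `γ` vanishes; hence any two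
distinct points of `X_f` are `ε`-separated at some coordinate, i.e. the `Γ`-action on
`X_f` is expansive. -/
theorem Xf_expansive_of_l1_unit {Γ : Type*} [Group Γ] [Countable Γ] [DecidableEq Γ]
    (hfg : Group.FG Γ) (f : Γ →₀ ℤ) (hf : IsL1Unit f) :
    (∀ x ∈ Xf f, (∀ γ : Γ, ‖x γ‖ < 1 / (3 * l1normZ f)) → x = 0) ∧
    (∀ x ∈ Xf f, ∀ y ∈ Xf f, x ≠ y → ∃ γ : Γ, 1 / (3 * l1normZ f) ≤ ‖x γ - y γ‖) := by
  set ε : ℝ := 1 / (3 * l1normZ f) with hε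
  have part1 : ∀ x ∈ Xf f, (∀ γ : Γ, ‖x γ‖ < ε) → x = 0 := by
    intro x hx hsm
    rcases le_or_gt (l1normZ f) 0 with hL | hL
    · exfalso
      have hε0 : ε ≤ 0 := by
        rw [hε]
        apply div_nonpos_of_nonneg_of_nonpos one_pos.le
        nlinarith
      exact absurd (hsm 1) (not_lt.mpr (hε0.trans (norm_nonneg _)))
    obtain ⟨g, hgsum, _, hgf⟩ := hf
    have hgsum' : Summable g := hgsum.of_norm
    choose t ht hnt using fun γ => exists_lift_abs (x γ)
    have htε : ∀ γ, |t γ| ≤ ε := fun γ => le_of_lt ((hnt γ) ▸ hsm γ)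
    -- the real convolution with f vanishes
    have key : ∀ γ : Γ, ∑ δ ∈ f.support, (f δ : ℝ) * t (γ * δ) = 0 := by
      intro γ
      set S : ℝ := ∑ δ ∈ f.support, (f δ : ℝ) * t (γ * δ) with hS
      have h1 : ((S : ℝ) : AddCircle (1:ℝ)) = 0 := by
        rw [hS, QuotientAddGroup.mk_sum]
        have step : ∀ δ ∈ f.support, (((f δ : ℝ) * t (γ * δ) : ℝ) : AddCircle (1:ℝ))
            = f δ • x (γ * δ) := by
          intro δ _
          rw [← ht (γ * δ), ← zsmul_eq_mul, AddCircle.coe_zsmul]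
        calc (∑ δ ∈ f.support, (((f δ : ℝ) * t (γ * δ) : ℝ) : AddCircle (1:ℝ)))
            = ∑ δ ∈ f.support, f δ • x (γ * δ) := Finset.sum_congr rfl step
          _ = 0 := hx γ
      obtain ⟨n, hn⟩ := AddCircle.coe_eq_zero_iff (1:ℝ) |>.mp h1
      have hSn : S = (n : ℝ) := by rw [← hn]; simp
      have hSle : |S| ≤ 1/3 := by
        have hb : |S| ≤ ∑ δ ∈ f.support, |(f δ : ℝ)| * ε := by
          refine (Finset.abs_sum_le_sum_abs _ _).trans ?_
          refine Finset.sum_le_sum fun δ _ => ?_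
          rw [abs_mul]
          exact mul_le_mul_of_nonneg_left (htε _) (abs_nonneg _)
        rw [← Finset.sum_mul, ← l1normZ] at hb
        have h2 : (l1normZ f) * ε = 1/3 := by
          rw [hε]; field_simp
        linarith
      have hn0 : n = 0 := by
        have h3 : |(n : ℝ)| < 1 := by rw [← hSn]; linarith
        rw [← Int.cast_abs] at h3
        exact Int.abs_lt_one_iff.mp (by exact_mod_cast h3)
      rw [hSn, hn0, Int.cast_zero]
    -- complex version
    set u : Γ → ℂ := fun α => ((t α : ℝ) : ℂ) with hu
    have keyC : ∀ γ : Γ, ∑ δ ∈ f.support, (f δ : ℂ) * u (γ * δ) = 0 := by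
      intro γ
      have h := key γ
      have h6 : ((∑ δ ∈ f.support, (f δ:ℝ) * t (γ*δ) : ℝ) : ℂ) = 0 := by rw [h]; simp
      push_cast at h6
      simpa [hu] using h6
    have hub : ∀ α, ‖u α‖ ≤ ε := by
      intro α
      rw [hu]
      simp only [Complex.norm_real, Real.norm_eq_abs]
      exact htε α
    -- summability of the basic building blocks
    have hsummand : ∀ (c : ℂ) (h : Γ → Γ), Summable (fun α => g α * c * u (h α)) := by
      intro c h
      apply Summable.of_norm_bounded (g := fun α => ‖g α‖ * (‖c‖ * ε)) (hgsum.mul_right _)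
      intro α
      rw [norm_mul, norm_mul, mul_assoc]
      exact mul_le_mul_of_nonneg_left
        (mul_le_mul_of_nonneg_left (hub _) (norm_nonneg c)) (norm_nonneg _)
    -- now show each t γ = 0
    have hzero : ∀ γ : Γ, u γ = 0 := by
      intro γ
      -- the double sum
      have hA0 : (∑' α : Γ, ∑ δ ∈ f.support, g α * (f δ : ℂ) * u (γ * α * δ)) = 0 := by
        rw [show (fun α : Γ => ∑ δ ∈ f.support, g α * (f δ : ℂ) * u (γ * α * δ)) = fun _ => 0
          from funext fun α => by
            calc ∑ δ ∈ f.support, g α * (f δ : ℂ) * u (γ * α * δ)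
                = g α * ∑ δ ∈ f.support, (f δ : ℂ) * u ((γ * α) * δ) := by
                  rw [Finset.mul_sum]
                  exact Finset.sum_congr rfl fun δ _ => by rw [← mul_assoc, mul_assoc γ]
              _ = 0 := by rw [keyC (γ * α), mul_zero]]
        exact tsum_zero
      have hswap : (∑' α : Γ, ∑ δ ∈ f.support, g α * (f δ : ℂ) * u (γ * α * δ))
          = ∑ δ ∈ f.support, ∑' α : Γ, g α * (f δ : ℂ) * u (γ * α * δ) :=
        Summable.tsum_finsetSum fun δ _ => hsummand _ _
      -- reindex each inner tsum via α ↦ α * δ⁻¹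
      have hreidx : ∀ δ : Γ, (∑' α : Γ, g α * (f δ : ℂ) * u (γ * α * δ))
          = ∑' β : Γ, g (β * δ⁻¹) * (f δ : ℂ) * u (γ * β) := by
        intro δ
        have := (Equiv.mulRight δ).tsum_eq
          (fun β : Γ => g (β * δ⁻¹) * (f δ : ℂ) * u (γ * β))
        rw [← this]
        apply tsum_congr
        intro α
        simp [mul_assoc]
      -- swap back
      have hswap2 : (∑ δ ∈ f.support, ∑' β : Γ, g (β * δ⁻¹) * (f δ : ℂ) * u (γ * β))
          = ∑' β : Γ, ∑ δ ∈ f.support, g (β * δ⁻¹) * (f δ : ℂ) * u (γ * β) :=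
        (Summable.tsum_finsetSum fun δ _ => by
          have := hsummand (f δ : ℂ) (fun β => γ * β)
          -- need summability of β ↦ g (β * δ⁻¹) * f δ * u (γ * β)
          exact Summable.of_norm_bounded (g := fun β => ‖g (β * δ⁻¹)‖ * (‖(f δ : ℂ)‖ * ε))
            (((Equiv.mulRight δ⁻¹).summable_iff.mpr hgsum).mul_right _)
            (fun β => by
              rw [norm_mul, norm_mul, mul_assoc]
              exact mul_le_mul_of_nonneg_left
                (mul_le_mul_of_nonneg_left (hub _) (norm_nonneg _)) (norm_nonneg _))).symm
      -- identify the coefficient with the convolution identity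
      have hcoef : ∀ β : Γ, (∑ δ ∈ f.support, g (β * δ⁻¹) * (f δ : ℂ))
          = if β = 1 then 1 else 0 := by
        intro β
        rw [← hgf β]
        have h4 : (∑' α : Γ, g α * (f (α⁻¹ * β) : ℂ))
            = ∑' δ : Γ, g (β * δ⁻¹) * (f δ : ℂ) := by
          rw [← ((Equiv.inv Γ).trans (Equiv.mulLeft β)).tsum_eq
            (fun α : Γ => g α * (f (α⁻¹ * β) : ℂ))]
          apply tsum_congr
          intro δ
          show g (β * δ⁻¹) * (f ((β * δ⁻¹)⁻¹ * β) : ℂ) = g (β * δ⁻¹) * (f δ : ℂ)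
          congr 2
          group
        rw [h4]
        exact (tsum_eq_sum fun δ hδ => by
          rw [Finsupp.notMem_support_iff.mp hδ]; simp).symm
      -- put everything together
      have final : (0 : ℂ) = u γ := by
        calc (0 : ℂ) = ∑' α : Γ, ∑ δ ∈ f.support, g α * (f δ : ℂ) * u (γ * α * δ) := hA0.symm
          _ = ∑ δ ∈ f.support, ∑' α : Γ, g α * (f δ : ℂ) * u (γ * α * δ) := hswap
          _ = ∑ δ ∈ f.support, ∑' β : Γ, g (β * δ⁻¹) * (f δ : ℂ) * u (γ * β) :=
              Finset.sum_congr rfl fun δ _ => hreidx δ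
          _ = ∑' β : Γ, ∑ δ ∈ f.support, g (β * δ⁻¹) * (f δ : ℂ) * u (γ * β) := hswap2
          _ = ∑' β : Γ, (∑ δ ∈ f.support, g (β * δ⁻¹) * (f δ : ℂ)) * u (γ * β) := by
              apply tsum_congr; intro β; rw [Finset.sum_mul]
          _ = ∑' β : Γ, (if β = 1 then (1:ℂ) else 0) * u (γ * β) := by
              apply tsum_congr; intro β; rw [hcoef β]
          _ = u γ := by
              rw [tsum_eq_single (1 : Γ) (fun b hb => by rw [if_neg hb, zero_mul])]
              simp
      exact final.symm
    -- conclude x = 0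
    funext γ
    have ht0 : t γ = 0 := by
      have h5 := hzero γ
      rw [hu] at h5
      simpa using h5
    have : x γ = ((0 : ℝ) : AddCircle (1:ℝ)) := by rw [← ht γ, ht0]
    simpa using this
  refine ⟨part1, ?_⟩
  intro x hx y hy hne
  by_contra h
  push_neg at h
  have hxy : x - y ∈ Xf f := by
    intro γ
    have h1 := hx γ
    have h2 := hy γ
    simp only [Pi.sub_apply, smul_sub, Finset.sum_sub_distrib, h1, h2, sub_zero]
  have := part1 (x - y) hxy (fun γ => h γ)
  exact hne (sub_eq_zero.mp this)
end

section
/- Let Γ be a group generated by a finite set S with e ∈ S = S⁻¹, and let Sⁿ denote the n-fold product set {s₁⋯s_n : s_i ∈ S}. If for every ε > 0 there exists n(ε) such that |Sⁿ| ≤ exp(ε√n) for all n ≥ n(ε), then liminf_{n→∞} (|S^{n+1}|/|Sⁿ| − 1)·log|Sⁿ| = 0. In particular, this hypothesis holds when Γ has polynomial growth (e.g. Γ finitely generated virtually nilpotent). -/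
open Filter Pointwise

set_option maxHeartbeats 1000000 in
/-- **Proposition `t11` 2) of the paper**: let `S` be a finite symmetric generating set of
`Γ` containing the identity.  If for every `ε > 0` one has `|S^n| ≤ exp(ε√n)` for all
sufficiently large `n`, then `liminf_n (|S^{n+1}|/|S^n| − 1)·log |S^n| = 0`.  In
particular this holds when `Γ` has polynomial growth (e.g. `Γ` finitely generated
virtually nilpotent). -/
theorem liminf_eq_zero_of_subexponential_growth {Γ : Type*} [Group Γ] [DecidableEq Γ]
    (S : Finset Γ) (h1 : (1 : Γ) ∈ S) (hsymm : S⁻¹ = S)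
    (hgen : Subgroup.closure (S : Set Γ) = ⊤) :
    ((∀ ε : ℝ, 0 < ε → ∃ N : ℕ, ∀ n ≥ N, ((S ^ n).card : ℝ) ≤ Real.exp (ε * Real.sqrt n)) →
      liminf (fun n : ℕ =>
        (((S ^ (n + 1)).card : ℝ) / ((S ^ n).card : ℝ) - 1) * Real.log ((S ^ n).card))
        atTop = 0) ∧
    ((∃ C D : ℝ, ∀ n : ℕ, 1 ≤ n → ((S ^ n).card : ℝ) ≤ C * (n : ℝ) ^ D) →
      liminf (fun n : ℕ =>
        (((S ^ (n + 1)).card : ℝ) / ((S ^ n).card : ℝ) - 1) * Real.log ((S ^ n).card))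
        atTop = 0) := by
  -- basic bookkeeping
  have hcard1 : ∀ n : ℕ, 1 ≤ (S ^ n).card := fun n =>
    Finset.card_pos.2 ⟨1, Finset.one_mem_pow h1⟩
  have hcpos : ∀ n : ℕ, (0 : ℝ) < ((S ^ n).card : ℝ) := fun n => by
    exact_mod_cast hcard1 n
  have hcard1' : ∀ n : ℕ, (1 : ℝ) ≤ ((S ^ n).card : ℝ) := fun n => by
    exact_mod_cast hcard1 n
  have hmono : ∀ n : ℕ, (S ^ n).card ≤ (S ^ (n + 1)).card := fun n =>
    Finset.card_le_card (by rw [pow_succ]; exact Finset.subset_mul_left _ h1)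
  set a : ℕ → ℝ := fun n => Real.log ((S ^ n).card) with ha
  set f : ℕ → ℝ := fun n =>
    (((S ^ (n + 1)).card : ℝ) / ((S ^ n).card : ℝ) - 1) * Real.log ((S ^ n).card) with hfdef
  have hanonneg : ∀ n, 0 ≤ a n := fun n => Real.log_nonneg (hcard1' n)
  have hamono : Monotone a := monotone_nat_of_le_succ fun n =>
    Real.log_le_log (hcpos n) (by exact_mod_cast hmono n)
  have hratio : ∀ n : ℕ, (1 : ℝ) ≤ ((S ^ (n + 1)).card : ℝ) / ((S ^ n).card : ℝ) := fun n =>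
    (one_le_div (hcpos n)).2 (by exact_mod_cast hmono n)
  have hfnonneg : ∀ n, 0 ≤ f n := fun n =>
    mul_nonneg (sub_nonneg.2 (hratio n)) (hanonneg n)
  have main : (∀ ε : ℝ, 0 < ε →
      ∃ N : ℕ, ∀ n ≥ N, ((S ^ n).card : ℝ) ≤ Real.exp (ε * Real.sqrt n)) →
      liminf f atTop = 0 := by
    intro hsub
    have hfreq : ∀ c : ℝ, 0 < c → ∃ᶠ n in atTop, f n ≤ c := by
      intro c hc
      by_contra hcon
      rw [Filter.not_frequently] at hcon
      have hcon' : ∀ᶠ n in atTop, c < f n := hcon.mono fun n hn => not_le.1 hn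
      rw [eventually_atTop] at hcon'
      obtain ⟨N, hN⟩ := hcon'
      -- from `c < f n` we get positivity of `a n` and a lower bound on the ratio
      have hstep : ∀ n, N ≤ n →
          0 < a n ∧ c / a n < ((S ^ (n + 1)).card : ℝ) / ((S ^ n).card : ℝ) - 1 := by
        intro n hn
        have h : c < (((S ^ (n + 1)).card : ℝ) / ((S ^ n).card : ℝ) - 1) * a n := hN n hn
        have hapos : 0 < a n := by
          rcases lt_or_eq_of_le (hanonneg n) with h' | h'
          · exact h'
          · exfalso
            rw [← h', mul_zero] at h
            exact absurd h (not_lt.2 hc.le)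
        refine ⟨hapos, ?_⟩
        rw [div_lt_iff₀ hapos]
        exact h
      -- increment estimate : a (n+1) ≥ a n + (1 - 1/r)
      have hlogr : ∀ n : ℕ,
          a (n + 1) = a n + Real.log (((S ^ (n + 1)).card : ℝ) / ((S ^ n).card : ℝ)) := by
        intro n
        rw [ha]
        rw [Real.log_div (ne_of_gt (hcpos (n + 1))) (ne_of_gt (hcpos n))]
        ring
      have hinc : ∀ n, N ≤ n →
          a n + (1 - (1 + c / a n)⁻¹) ≤ a (n + 1) := by
        intro n hn
        obtain ⟨hapos, hlt⟩ := hstep n hn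
        have hxpos : 0 < c / a n := div_pos hc hapos
        set r : ℝ := ((S ^ (n + 1)).card : ℝ) / ((S ^ n).card : ℝ) with hr
        have hrpos : (0 : ℝ) < r := lt_of_lt_of_le one_pos (hratio n)
        have h1r : 1 - r⁻¹ ≤ Real.log r := Real.one_sub_inv_le_log_of_pos hrpos
        have hrx : 1 + c / a n < r := by linarith
        have hinv : r⁻¹ < (1 + c / a n)⁻¹ :=
          inv_strictAnti₀ (by linarith) hrx
        rw [hlogr n]
        have : 1 - (1 + c / a n)⁻¹ ≤ Real.log r := by linarith
        linarith
      -- phase 1 : `a` eventually exceeds `c`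
      have hphase1 : ∀ j : ℕ, min c ((j : ℝ) / 2) ≤ a (N + j) := by
        intro j
        induction j with
        | zero => simpa using (min_le_right c 0).trans (hanonneg N)
        | succ j ih =>
          rcases le_or_gt c (a (N + j)) with hcase | hcase
          · have : a (N + j) ≤ a (N + j + 1) := hamono (Nat.le_succ _)
            exact le_trans (min_le_left _ _) (le_trans hcase this)
          · have hn : N ≤ N + j := Nat.le_add_right _ _
            obtain ⟨hapos, _⟩ := hstep (N + j) hn
            have hxgt : 1 < c / a (N + j) := (one_lt_div hapos).2 hcase
            have hinvlt : (1 + c / a (N + j))⁻¹ < 1 / 2 := by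
              rw [inv_lt_comm₀ (by linarith) (by norm_num)]
              norm_num
              linarith
            have h2 := hinc (N + j) hn
            have step : a (N + j) + 1 / 2 ≤ a (N + j + 1) := by linarith
            have haux : min c (((j : ℝ) + 1) / 2) ≤ min c ((j : ℝ) / 2) + 1 / 2 := by
              rcases le_total c ((j : ℝ) / 2) with h' | h'
              · rw [min_eq_left h', min_eq_left (by linarith)]
                linarith
              · rw [min_eq_right h']
                exact (min_le_right _ _).trans (by linarith)
            have hfin : min c (((j : ℝ) + 1) / 2) ≤ a (N + j + 1) :=
              le_trans haux (by linarith)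
            push_cast
            exact hfin
      obtain ⟨j0, hj0⟩ := exists_nat_ge (2 * c)
      have hcM : c ≤ a (N + j0) := by
        have := hphase1 j0
        have : min c ((j0 : ℝ) / 2) = c := min_eq_left (by linarith)
        calc c = min c ((j0 : ℝ) / 2) := this.symm
        _ ≤ a (N + j0) := hphase1 j0
      set M : ℕ := N + j0 with hM
      have hMN : N ≤ M := Nat.le_add_right _ _
      -- phase 2 : quadratic growth of `a ^ 2`
      have hphase2 : ∀ j : ℕ, c * j ≤ a (M + j) ^ 2 := by
        intro j
        induction j with
        | zero => simpa using sq_nonneg (a M)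
        | succ j ih =>
          set t : ℝ := a (M + j) with ht
          have hct : c ≤ t := le_trans hcM (hamono (Nat.le_add_right _ _))
          have htpos : 0 < t := lt_of_lt_of_le hc hct
          have hn : N ≤ M + j := le_trans hMN (Nat.le_add_right _ _)
          have hx1 : c / t ≤ 1 := (div_le_one htpos).2 hct
          have hxpos : 0 < c / t := div_pos hc htpos
          have hkey : t + c / (2 * t) ≤ a (M + j + 1) := by
            have h2 := hinc (M + j) hn
            have hx : 1 - (1 + c / t)⁻¹ = (c / t) / (1 + c / t) := by
              field_simp
              ring
            have hge : (c / t) / 2 ≤ (c / t) / (1 + c / t) := by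
              gcongr
              linarith
            have hkey' : c / (2 * t) ≤ 1 - (1 + c / t)⁻¹ := by
              rw [hx]
              calc c / (2 * t) = (c / t) / 2 := by ring
              _ ≤ (c / t) / (1 + c / t) := hge
            linarith
          have hsq : (t + c / (2 * t)) ^ 2 ≤ a (M + j + 1) ^ 2 := by
            have h0 : 0 ≤ t + c / (2 * t) := by positivity
            exact pow_le_pow_left₀ h0 hkey 2
          have hexpand : t ^ 2 + c ≤ (t + c / (2 * t)) ^ 2 := by
            have h2t : t ≠ 0 := ne_of_gt htpos
            have : (t + c / (2 * t)) ^ 2 = t ^ 2 + c + (c / (2 * t)) ^ 2 := by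
              field_simp
              ring
            nlinarith [sq_nonneg (c / (2 * t))]
          show c * ((j + 1 : ℕ) : ℝ) ≤ a (M + j + 1) ^ 2
          push_cast
          nlinarith [ih, hexpand, hsq]
      -- conclusion : contradiction with subexponential growth
      set ε : ℝ := Real.sqrt c / 2 with hε
      have hεpos : 0 < ε := by
        have := Real.sqrt_pos.2 hc
        positivity
      obtain ⟨Nε, hNε⟩ := hsub ε hεpos
      set j : ℕ := M + Nε + 1 with hj
      set n : ℕ := M + j with hn
      have hnNε : Nε ≤ n := by omega
      have hup : a n ≤ ε * Real.sqrt n := by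
        have := hNε n hnNε
        rw [ha]
        exact (Real.log_le_iff_le_exp (hcpos n)).2 this
      have hlow : c * (j : ℝ) ≤ a n ^ 2 := hphase2 j
      have hsq2 : a n ^ 2 ≤ ε ^ 2 * n := by
        have h0 : (0 : ℝ) ≤ Real.sqrt n := Real.sqrt_nonneg _
        have := pow_le_pow_left₀ (hanonneg n) hup 2
        calc a n ^ 2 ≤ (ε * Real.sqrt n) ^ 2 := this
        _ = ε ^ 2 * Real.sqrt n ^ 2 := by ring
        _ = ε ^ 2 * n := by rw [Real.sq_sqrt (Nat.cast_nonneg n)]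
      have hε2 : ε ^ 2 = c / 4 := by
        rw [hε]
        rw [div_pow, Real.sq_sqrt hc.le]
        norm_num
      have hMj : (M : ℝ) ≤ (j : ℝ) := by exact_mod_cast Nat.le_of_lt (by omega)
      have hnj : (n : ℝ) = (M : ℝ) + (j : ℝ) := by exact_mod_cast rfl
      have hn1 : (1 : ℝ) ≤ (n : ℝ) := by exact_mod_cast Nat.one_le_iff_ne_zero.2 (by omega)
      nlinarith [hlow, hsq2, hε2, hMj, hnj, hn1, hc]
    -- now compute the liminf
    have hb : IsBoundedUnder (· ≥ ·) atTop f :=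
      Filter.isBoundedUnder_of ⟨0, fun n => hfnonneg n⟩
    have hcob : IsCoboundedUnder (· ≥ ·) atTop f :=
      Filter.IsCoboundedUnder.of_frequently_le (hfreq 1 one_pos)
    have hge : 0 ≤ liminf f atTop :=
      le_liminf_of_le hcob (Eventually.of_forall hfnonneg)
    have hle : liminf f atTop ≤ 0 := by
      refine le_of_forall_pos_le_add fun c hc => ?_
      rw [zero_add]
      exact liminf_le_of_frequently_le (hfreq c hc) hb
    linarith
  refine ⟨main, fun h => main ?_⟩
  obtain ⟨C, D, hCD⟩ := h
  have hC : (1 : ℝ) ≤ C := by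
    have := hCD 1 le_rfl
    rw [Nat.cast_one, Real.one_rpow, mul_one] at this
    exact le_trans (hcard1' 1) this
  intro ε hεpos
  -- `log n / √n → 0`
  have hlim : Tendsto (fun x : ℝ => Real.log x / Real.sqrt x) atTop (nhds 0) := by
    have h := (isLittleO_log_rpow_atTop (by norm_num : (0:ℝ) < 1/2)).tendsto_div_nhds_zero
    refine h.congr fun x => ?_
    rw [Real.sqrt_eq_rpow]
  have hlimn : Tendsto (fun n : ℕ => D * (Real.log n / Real.sqrt n)) atTop (nhds 0) := by
    have := (hlim.comp tendsto_natCast_atTop_atTop).const_mul D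
    simpa using this
  have hev1 : ∀ᶠ n : ℕ in atTop, D * (Real.log n / Real.sqrt n) < ε / 2 :=
    hlimn.eventually_lt_const (by positivity)
  have hsqrtlim : Tendsto (fun n : ℕ => ε / 2 * Real.sqrt n) atTop atTop := by
    refine Tendsto.const_mul_atTop (by positivity) ?_
    have : Tendsto (fun x : ℝ => Real.sqrt x) atTop atTop := by
      have := tendsto_rpow_atTop (by norm_num : (0:ℝ) < 1/2)
      refine this.congr fun x => ?_
      rw [Real.sqrt_eq_rpow]
    exact this.comp tendsto_natCast_atTop_atTop
  have hev2 : ∀ᶠ n : ℕ in atTop, Real.log C ≤ ε / 2 * Real.sqrt n :=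
    hsqrtlim.eventually_ge_atTop _
  have hev3 : ∀ᶠ n : ℕ in atTop, 1 ≤ n := eventually_ge_atTop 1
  obtain ⟨N, hNall⟩ := eventually_atTop.1 (hev1.and (hev2.and hev3))
  refine ⟨N, fun n hn => ?_⟩
  obtain ⟨h1', h2', h3'⟩ := hNall n hn
  have hnpos : (0 : ℝ) < (n : ℝ) := by exact_mod_cast h3'
  have hsqrtpos : 0 < Real.sqrt n := Real.sqrt_pos.2 hnpos
  have hDlog : D * Real.log n ≤ ε / 2 * Real.sqrt n := by
    have := mul_le_mul_of_nonneg_right h1'.le hsqrtpos.le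
    calc D * Real.log n = D * (Real.log n / Real.sqrt n) * Real.sqrt n := by
          field_simp
    _ ≤ ε / 2 * Real.sqrt n := this
  have hCpos : (0 : ℝ) < C := lt_of_lt_of_le one_pos hC
  have hCn : C * (n : ℝ) ^ D = Real.exp (Real.log C + Real.log n * D) := by
    rw [Real.exp_add, Real.exp_log hCpos, Real.rpow_def_of_pos hnpos]
  calc ((S ^ n).card : ℝ) ≤ C * (n : ℝ) ^ D := hCD n h3'
  _ = Real.exp (Real.log C + Real.log n * D) := hCn
  _ ≤ Real.exp (ε * Real.sqrt n) := by
      apply Real.exp_le_exp.2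
      have : Real.log n * D = D * Real.log n := mul_comm _ _
      rw [this]
      linarith
end
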